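/- Let M be an e-BZ datum on I = [n+1, n+m] and let i ∈ I with ε_i(M) := −M_{[n+1,i−1]∪{i+1}} > 0. Define the operator ẽ_i*M as the unique e-BZ datum with (ẽ_i*M)_{[i+1,n+m+1]} = M_{[i+1,n+m+1]} + 1, and (ẽ_i*M)_k = M_k for all Maya diagrams k with not (i ∉ k and i+1 ∈ k). Then N := (ẽ_i*(M^♯))^♯ satisfies: N_k = M_k + 1 for all k with i ∉ k and i+1 ∈ k, and N_k = M_k for all k such that i ∈ k ⇔ i+1 ∈ k. -/

import Mathlib

/-- The extended interval Ĩ = [n+1, n+m+1]. -/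
noncomputable def Itilde (n m : ℤ) : Finset ℤ := Finset.Icc (n + 1) (n + m + 1)

/-- The pairing ⟨h_i, k⟩ ∈ {−1,0,1} determined by membership of i, i+1 in k. -/
def pairH (i : ℤ) (k : Finset ℤ) : ℤ :=
  if i ∈ k ∧ i + 1 ∉ k then 1 else if i ∉ k ∧ i + 1 ∈ k then -1 else 0

/-- Edge inequalities (BZ-1). -/
def BZ1 (n m : ℤ) (M : Finset ℤ → ℤ) : Prop :=
  ∀ (i j : ℤ) (k : Finset ℤ), i ∈ Itilde n m → j ∈ Itilde n m → i ≠ j →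
    k ⊆ Itilde n m → i ∉ k → j ∉ k →
    M (insert i k) + M (insert j k) ≤ M (insert i (insert j k)) + M k

/-- Tropical Plücker relations (BZ-2). -/
def BZ2 (n m : ℤ) (M : Finset ℤ → ℤ) : Prop :=
  ∀ (i j l : ℤ) (k : Finset ℤ), i ∈ Itilde n m → j ∈ Itilde n m → l ∈ Itilde n m →
    i < j → j < l → k ⊆ Itilde n m → i ∉ k → j ∉ k → l ∉ k →
    M (insert i (insert l k)) + M (insert j k) =
      min (M (insert i (insert j k)) + M (insert l k))
        (M (insert j (insert l k)) + M (insert i k))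

/-- The e-normalization condition (BZ-0). -/
def eNorm (n m : ℤ) (M : Finset ℤ → ℤ) : Prop :=
  ∀ i ∈ Finset.Icc (n + 1) (n + m), M (Finset.Icc (n + 1) i) = 0

/-- e-BZ datum on the interval I = [n+1, n+m], with the conventions M_∅ = M_Ĩ = 0. -/
def eBZ (n m : ℤ) (M : Finset ℤ → ℤ) : Prop :=
  M ∅ = 0 ∧ M (Itilde n m) = 0 ∧ BZ1 n m M ∧ BZ2 n m M ∧ eNorm n m M

/-- wt^∨(M) paired with a Maya diagram k. -/
noncomputable def wtv (n m : ℤ) (M : Finset ℤ → ℤ) (k : Finset ℤ) : ℤ :=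
  ∑ i ∈ Finset.Icc (n + 1) (n + m), M (Finset.Icc (i + 1) (n + m + 1)) * pairH i k

/-- The sharp operation M ↦ M^♯. -/
noncomputable def sharp (n m : ℤ) (M : Finset ℤ → ℤ) : Finset ℤ → ℤ :=
  fun k => M (Itilde n m \ k) - wtv n m M k

/- Auxiliary lemmas -/

lemma compl_Icc (n m j : ℤ) (hj : j ∈ Finset.Icc (n+1) (n+m)) :
    Itilde n m \ Finset.Icc (j+1) (n+m+1) = Finset.Icc (n+1) j := by
  simp only [Finset.mem_Icc] at hj
  ext x
  simp only [Itilde, Finset.mem_sdiff, Finset.mem_Icc]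
  omega

lemma pairH_sdiff (n m j : ℤ) (k : Finset ℤ) (hj : j ∈ Finset.Icc (n+1) (n+m))
    (hk : k ⊆ Itilde n m) : pairH j (Itilde n m \ k) = - pairH j k := by
  simp only [Finset.mem_Icc] at hj
  have hjI : j ∈ Itilde n m := by simp only [Itilde, Finset.mem_Icc]; omega
  have hj1I : j + 1 ∈ Itilde n m := by simp only [Itilde, Finset.mem_Icc]; omega
  unfold pairH
  by_cases h1 : j ∈ k <;> by_cases h2 : j + 1 ∈ k <;>
    simp [Finset.mem_sdiff, h1, h2, hjI, hj1I]

lemma wtv_sdiff (n m : ℤ) (M : Finset ℤ → ℤ) (k : Finset ℤ) (hk : k ⊆ Itilde n m) :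
    wtv n m M (Itilde n m \ k) = - wtv n m M k := by
  unfold wtv
  rw [← Finset.sum_neg_distrib]
  refine Finset.sum_congr rfl fun j hj => ?_
  rw [pairH_sdiff n m j k hj hk]
  ring

lemma pairH_tail (n m l j : ℤ) (hl : l ∈ Finset.Icc (n+1) (n+m))
    (hj : j ∈ Finset.Icc (n+1) (n+m)) :
    pairH l (Finset.Icc (j+1) (n+m+1)) = if l = j then -1 else 0 := by
  simp only [Finset.mem_Icc] at hl hj
  unfold pairH
  simp only [Finset.mem_Icc]
  split_ifs <;> omega

lemma sharp_tail (n m j : ℤ) (M : Finset ℤ → ℤ) (hj : j ∈ Finset.Icc (n+1) (n+m))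
    (hnorm : eNorm n m M) :
    sharp n m M (Finset.Icc (j+1) (n+m+1)) = M (Finset.Icc (j+1) (n+m+1)) := by
  have hw : wtv n m M (Finset.Icc (j+1) (n+m+1)) = - M (Finset.Icc (j+1) (n+m+1)) := by
    unfold wtv
    rw [Finset.sum_eq_single_of_mem j hj]
    · rw [pairH_tail n m j j hj hj]; simp
    · intro l hl hne
      rw [pairH_tail n m l j hl hj]
      simp [hne]
  unfold sharp
  rw [compl_Icc n m j hj, hnorm j hj, hw]
  ring

/-- If E = ẽ_i*(M^♯) (characterized as the unique e-BZ datum with the prescribed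
components), then N = E^♯ satisfies N_k = M_k + 1 on ℳ(i)* and N_k = M_k off
ℳ(i) ∪ ℳ(i)*. -/
theorem stmt14 (n m : ℤ) (hm : 0 < m) (M E : Finset ℤ → ℤ) (i : ℤ)
    (hi : i ∈ Finset.Icc (n + 1) (n + m)) (hM : eBZ n m M)
    (heps : 0 < -M (insert (i + 1) (Finset.Icc (n + 1) (i - 1))))
    (hE : eBZ n m E)
    (hE1 : E (Finset.Icc (i + 1) (n + m + 1)) = sharp n m M (Finset.Icc (i + 1) (n + m + 1)) + 1)
    (hE2 : ∀ k ⊆ Itilde n m, ¬(i ∉ k ∧ i + 1 ∈ k) → E k = sharp n m M k) :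
    (∀ k ⊆ Itilde n m, i ∉ k → i + 1 ∈ k → sharp n m E k = M k + 1) ∧
    (∀ k ⊆ Itilde n m, (i ∈ k ↔ i + 1 ∈ k) → sharp n m E k = M k) := by
  have hiI : i ∈ Finset.Icc (n+1) (n+m) := hi
  have hi' : n + 1 ≤ i ∧ i ≤ n + m := Finset.mem_Icc.mp hi
  have hnorm : eNorm n m M := hM.2.2.2.2
  -- tails of E in terms of tails of M
  have key : ∀ j ∈ Finset.Icc (n+1) (n+m),
      E (Finset.Icc (j+1) (n+m+1)) =
        M (Finset.Icc (j+1) (n+m+1)) + (if j = i then 1 else 0) := by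
    intro j hj
    have hj' : n + 1 ≤ j ∧ j ≤ n + m := Finset.mem_Icc.mp hj
    by_cases hji : j = i
    · subst hji
      rw [hE1, sharp_tail n m j M hj hnorm]
      simp
    · have hsub : Finset.Icc (j+1) (n+m+1) ⊆ Itilde n m :=
        Finset.Icc_subset_Icc (by omega) le_rfl
      have hcond : ¬(i ∉ Finset.Icc (j+1) (n+m+1) ∧ i + 1 ∈ Finset.Icc (j+1) (n+m+1)) := by
        simp only [Finset.mem_Icc]
        omega
      rw [hE2 _ hsub hcond, sharp_tail n m j M hj hnorm]
      simp [hji]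
  have hwtvE : ∀ k : Finset ℤ, wtv n m E k = wtv n m M k + pairH i k := by
    intro k
    unfold wtv
    calc ∑ j ∈ Finset.Icc (n+1) (n+m), E (Finset.Icc (j+1) (n+m+1)) * pairH j k
        = ∑ j ∈ Finset.Icc (n+1) (n+m),
            (M (Finset.Icc (j+1) (n+m+1)) * pairH j k
              + (if j = i then pairH j k else 0)) := by
          refine Finset.sum_congr rfl fun j hj => ?_
          rw [key j hj]
          by_cases hji : j = i <;> simp [hji] <;> ring
      _ = _ := by
          rw [Finset.sum_add_distrib, Finset.sum_ite_eq' _ i (fun j => pairH j k)]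
          simp [hiI]
  constructor
  · intro k hk hik hi1k
    have hiIt : i ∈ Itilde n m := by simp only [Itilde, Finset.mem_Icc]; omega
    have hcond : ¬(i ∉ Itilde n m \ k ∧ i + 1 ∈ Itilde n m \ k) := by
      simp only [Finset.mem_sdiff]
      intro h
      exact h.1 ⟨hiIt, hik⟩
    have hEc := hE2 _ (Finset.sdiff_subset) hcond
    unfold sharp at hEc ⊢
    rw [hEc, Finset.sdiff_sdiff_eq_self hk, wtv_sdiff n m M k hk, hwtvE k]
    have hp : pairH i k = -1 := by simp [pairH, hik, hi1k]
    rw [hp]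
    ring
  · intro k hk hiff
    have hiIt : i ∈ Itilde n m := by simp only [Itilde, Finset.mem_Icc]; omega
    have hcond : ¬(i ∉ Itilde n m \ k ∧ i + 1 ∈ Itilde n m \ k) := by
      simp only [Finset.mem_sdiff]
      intro h
      exact h.1 ⟨hiIt, fun hik => h.2.2 (hiff.mp hik)⟩
    have hEc := hE2 _ (Finset.sdiff_subset) hcond
    unfold sharp at hEc ⊢
    rw [hEc, Finset.sdiff_sdiff_eq_self hk, wtv_sdiff n m M k hk, hwtvE k]
    have hp : pairH i k = 0 := by
      by_cases h1 : i ∈ k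
      · simp [pairH, h1, hiff.mp h1]
      · have h2 : i + 1 ∉ k := fun h => h1 (hiff.mpr h)
        simp [pairH, h1, h2]
    rw [hp]
    ring
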